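/- Let W be a Coxeter group with simple reflections S, δ an automorphism of W with δ(S) = S, and J ⊆ S with W_J finite. Let T(J,δ) be the set of sequences (J_n, w_n)_{n≥0} with J = J₀ ⊇ J₁ ⊇ ⋯, w_n ∈ ^{δ(J_n)}W^{J_n}, J_{n+1} = J_n ∩ δ⁻¹(Ad(w_n) J_n), and w_{n+1} ∈ w_n W_{J_n} for all n. Then the map (J_n, w_n)_{n≥0} ↦ w_∞ (the eventual constant value of the sequence w_n) is a bijection from T(J,δ) onto ^{δ(J)}W, the set of minimal-length representatives of the cosets W_{δ(J)}\W. -/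

import Mathlib

set_option linter.unusedSectionVars false
set_option linter.unusedVariables false

open CoxeterSystem

variable {B W : Type*} [DecidableEq B] [Group W] {M : CoxeterMatrix B}

/-- The standard parabolic subgroup `W_J`. -/
def parabolic (cs : CoxeterSystem M W) (J : Finset B) : Subgroup W :=
  Subgroup.closure (cs.simple '' ↑J)

/-- `w` is the minimal length representative of its coset `W_K w` (i.e. `w ∈ ᴷW`):
no simple reflection from `K` is a left descent. -/
def IsMinLeft (cs : CoxeterSystem M W) (K : Finset B) (w : W) : Prop :=
  ∀ i ∈ K, cs.length w < cs.length (cs.simple i * w)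

/-- `w ∈ ᴷWᴶ`: minimal length representative of its double coset `W_K w W_J`. -/
def IsMinDouble (cs : CoxeterSystem M W) (K J : Finset B) (w : W) : Prop :=
  (∀ i ∈ K, cs.length w < cs.length (cs.simple i * w)) ∧
  (∀ j ∈ J, cs.length w < cs.length (w * cs.simple j))

/-- The set `T(J,δ)` of Bédard: sequences `(J_n, w_n)` with `J₀ = J`,
`w_n ∈ ^{δ(J_n)}W^{J_n}`, `J_{n+1} = J_n ∩ δ⁻¹(Ad(w_n) J_n)` and
`w_{n+1} ∈ w_n W_{J_n}`. -/
def InT (cs : CoxeterSystem M W) (δW : W ≃* W) (δb : B ≃ B) (J : Finset B)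
    (Js : ℕ → Finset B) (ws : ℕ → W) : Prop :=
  Js 0 = J ∧
  (∀ n, IsMinDouble cs ((Js n).image δb) (Js n) (ws n)) ∧
  (∀ n, ∀ i : B, i ∈ Js (n + 1) ↔
      i ∈ Js n ∧ ∃ j ∈ Js n, δW (cs.simple i) = ws n * cs.simple j * (ws n)⁻¹) ∧
  (∀ n, (ws n)⁻¹ * ws (n + 1) ∈ parabolic cs (Js n))

/-- `v` is the eventual value of the sequence `ws`. -/
def EvVal (ws : ℕ → W) (v : W) : Prop := ∃ N : ℕ, ∀ n : ℕ, N ≤ n → ws n = v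


open List

namespace BedardAux

open scoped Classical

set_option linter.unusedSectionVars false

variable (cs : CoxeterSystem M W)

local prefix:100 "σ" => cs.simple
local prefix:100 "π" => cs.wordProd
local prefix:100 "ℓ" => cs.length

/-- The permutation of `W × ℤˣ` associated to a simple reflection. -/
noncomputable def eta (i : B) : Equiv.Perm (W × ℤˣ) :=
  Function.Involutive.toPerm
    (fun p => (σ i * p.1 * σ i, if p.1 = σ i then -p.2 else p.2))
    (by
      rintro ⟨w, ε⟩
      have h : σ i * w * σ i = σ i ↔ w = σ i := by
        constructor
        · intro h
          have := congrArg (fun x => σ i * x * σ i) h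
          simpa [mul_assoc] using this
        · rintro rfl; simp
      by_cases hw : w = σ i
      · simp [hw, h]
      · simp only [h, hw, if_false, if_neg hw]
        rw [Prod.mk.injEq]
        refine ⟨?_, rfl⟩
        simp [mul_assoc])

theorem eta_apply (i : B) (w : W) (ε : ℤˣ) :
    eta cs i (w, ε) = (σ i * w * σ i, if w = σ i then -ε else ε) := rfl

/-- Product of the `eta` permutations over a word. -/
noncomputable def etaWord (ω : List B) : Equiv.Perm (W × ℤˣ) := (ω.map (eta cs)).prod

@[simp] theorem etaWord_nil : etaWord cs [] = 1 := by simp [etaWord]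

theorem etaWord_cons (i : B) (ω : List B) :
    etaWord cs (i :: ω) = eta cs i * etaWord cs ω := by simp [etaWord]

theorem rightInvSeq_cons (i : B) (ω : List B) :
    cs.rightInvSeq (i :: ω) = ((π ω)⁻¹ * σ i * π ω) :: cs.rightInvSeq ω := rfl

theorem etaWord_apply (ω : List B) (w : W) (ε : ℤˣ) :
    etaWord cs ω (w, ε) =
      (π ω * w * (π ω)⁻¹, ε * (-1) ^ (List.count w (cs.rightInvSeq ω))) := by
  induction ω generalizing w ε with
  | nil => simp
  | cons i ω ih =>
      rw [etaWord_cons, Equiv.Perm.mul_apply, ih, eta_apply]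
      have hiff : π ω * w * (π ω)⁻¹ = σ i ↔ w = (π ω)⁻¹ * σ i * π ω := by
        constructor
        · intro h; rw [← h]; group
        · intro h; rw [h]; group
      have hfst : σ i * (π ω * w * (π ω)⁻¹) * σ i
          = π (i :: ω) * w * (π (i :: ω))⁻¹ := by
        rw [cs.wordProd_cons]; simp [mul_assoc]
      by_cases hw : w = (π ω)⁻¹ * σ i * π ω
      · have hc : List.count w (cs.rightInvSeq (i :: ω))
            = List.count w (cs.rightInvSeq ω) + 1 := by
          rw [rightInvSeq_cons, List.count_cons, if_pos (by simp [hw])]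
        rw [hc, if_pos (hiff.mpr hw), Prod.mk.injEq]
        refine ⟨hfst, ?_⟩
        rw [pow_succ, ← mul_assoc, mul_neg_one]
      · have hc : List.count w (cs.rightInvSeq (i :: ω))
            = List.count w (cs.rightInvSeq ω) := by
          rw [rightInvSeq_cons, List.count_cons, if_neg (by rw [beq_iff_eq]; exact fun h => hw h.symm), add_zero]
        rw [hc, if_neg (fun h => hw (hiff.mp h)), Prod.mk.injEq]
        exact ⟨hfst, rfl⟩


-- ### Section 2 ###


/-- The element `(π (alt k))⁻¹ * π (alt (k+1))`, an entry of inversion sequences of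
alternating words. -/
noncomputable def galt (i i' : B) (k : ℕ) : W :=
  (π (alternatingWord i i' k))⁻¹ * π (alternatingWord i i' (k + 1))

theorem inv_pow_mul_of_sq_one {G : Type*} [Group G] {q b : G} (hb : b * b = 1)
    (hq : q * b = b * q⁻¹) (v : ℕ) : (q ^ v)⁻¹ * b = b * q ^ v := by
  induction v with
  | zero => simp
  | succ v ih =>
      have h1 : q⁻¹ * b = b * q := by
        have := congrArg (fun x => q⁻¹ * x * q) hq
        simpa [mul_assoc] using this.symm
      calc (q ^ (v + 1))⁻¹ * b = q⁻¹ * ((q ^ v)⁻¹ * b) := by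
            rw [pow_succ, mul_inv_rev, mul_assoc]
        _ = q⁻¹ * b * q ^ v := by rw [ih, mul_assoc]
        _ = b * q ^ (v + 1) := by rw [h1, pow_succ', mul_assoc]

theorem galt_eq (i i' : B) (k : ℕ) :
    galt cs i i' k = σ i' * (σ i * σ i') ^ k := by
  have hb : σ i' * σ i' = 1 := cs.simple_mul_simple_self i'
  have hq : (σ i * σ i') * σ i' = σ i' * (σ i * σ i')⁻¹ := by
    rw [mul_inv_rev, cs.inv_simple, cs.inv_simple]
    simp [mul_assoc]
  have key : ∀ v : ℕ, ((σ i * σ i') ^ v)⁻¹ * σ i' = σ i' * (σ i * σ i') ^ v :=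
    inv_pow_mul_of_sq_one hb hq
  unfold galt
  rw [cs.prod_alternatingWord_eq_mul_pow, cs.prod_alternatingWord_eq_mul_pow]
  by_cases hk : Even k
  · obtain ⟨c, rfl⟩ := hk
    have h1 : ¬ Even (c + c + 1) := by simp [parity_simps]
    have h2 : (c + c + 1) / 2 = c := by omega
    have h3 : (c + c) / 2 = c := by omega
    rw [if_pos (show Even (c + c) from ⟨c, rfl⟩), if_neg h1, h2, h3, one_mul]
    rw [← mul_assoc, key, mul_assoc, ← pow_add]
  · have hk' : Odd k := Nat.odd_iff.mpr (Nat.not_even_iff.mp hk)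
    obtain ⟨c, rfl⟩ := hk'
    have h1 : Even (2 * c + 1 + 1) := by simp [parity_simps]
    have h2 : (2 * c + 1 + 1) / 2 = c + 1 := by omega
    have h3 : (2 * c + 1) / 2 = c := by omega
    rw [if_neg hk, if_pos h1, h2, h3, one_mul, mul_inv_rev, cs.inv_simple]
    rw [mul_assoc, ← mul_assoc ((σ i * σ i') ^ c)⁻¹, key]
    rw [mul_assoc, ← pow_add]
    congr 2
    omega

theorem galt_add_period (i i' : B) (hq : (σ i * σ i') ^ M i i' = 1) (k : ℕ) :
    galt cs i i' (k + M i i') = galt cs i i' k := by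
  rw [galt_eq, galt_eq, pow_add, hq, mul_one]

theorem rightInvSeq_alternatingWord (i i' : B) (n : ℕ) :
    cs.rightInvSeq (alternatingWord i i' n)
      = ((List.range n).reverse).map (galt cs i i') := by
  induction n with
  | zero => simp [alternatingWord]
  | succ n ih =>
      rw [alternatingWord_succ' i i' n]
      rw [rightInvSeq_cons, ih]
      have hrev : (List.range (n + 1)).reverse
          = n :: (List.range n).reverse := by
        rw [List.range_succ, List.reverse_append]
        simp
      rw [hrev, List.map_cons]
      congr 1
      unfold galt
      rw [alternatingWord_succ' i i' n, cs.wordProd_cons, mul_assoc]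

theorem count_rightInvSeq_alt_even (i i' : B) (w : W) :
    Even (List.count w (cs.rightInvSeq (alternatingWord i i' (2 * M i i')))) := by
  set m := M i i' with hm
  have hq : (σ i * σ i') ^ m = 1 := cs.simple_mul_simple_pow i i'
  rw [rightInvSeq_alternatingWord]
  have h2m : 2 * m = m + m := by omega
  rw [h2m, List.range_add, List.reverse_append, List.map_append,
    ← List.map_reverse (f := fun x => m + x) (l := List.range m), List.map_map]
  have : ((List.range m).reverse).map (galt cs i i' ∘ fun x => m + x)
      = ((List.range m).reverse).map (galt cs i i') := by
    apply List.map_congr_left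
    intro a _
    show galt cs i i' (m + a) = galt cs i i' a
    rw [add_comm]
    exact galt_add_period cs i i' hq a
  rw [this, List.count_append]
  exact ⟨_, rfl⟩

theorem eta_mul_pow (i i' : B) (m : ℕ) :
    (eta cs i * eta cs i') ^ m = etaWord cs (alternatingWord i i' (2 * m)) := by
  induction m with
  | zero => simp [alternatingWord]
  | succ m ih =>
      have h1 : 2 * (m + 1) = (2 * m + 1) + 1 := by omega
      rw [h1, alternatingWord_succ' i i' (2 * m + 1),
        alternatingWord_succ' i i' (2 * m)]
      rw [if_neg (by simp [parity_simps]), if_pos (by simp [parity_simps])]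
      rw [etaWord_cons, etaWord_cons, ← ih, pow_succ']
      rw [mul_assoc]

theorem eta_liftable : M.IsLiftable (eta cs) := by
  intro i i'
  rw [eta_mul_pow]
  apply Equiv.ext
  rintro ⟨w, ε⟩
  rw [etaWord_apply]
  have h1 : π (alternatingWord i i' (2 * M i i')) = 1 := by
    rw [cs.prod_alternatingWord_eq_mul_pow, if_pos (by simp [parity_simps])]
    rw [one_mul]
    have : 2 * M i i' / 2 = M i i' := by omega
    rw [this]
    exact cs.simple_mul_simple_pow i i'
  have h2 := count_rightInvSeq_alt_even cs i i' w
  rw [h1, h2.neg_one_pow]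
  simp

/-- The sign homomorphism `W →* Perm (W × ℤˣ)`. -/
noncomputable def theta : W →* Equiv.Perm (W × ℤˣ) :=
  cs.lift ⟨eta cs, eta_liftable cs⟩

theorem theta_simple (i : B) : theta cs (σ i) = eta cs i :=
  cs.lift_apply_simple (eta_liftable cs) i

theorem theta_wordProd (ω : List B) : theta cs (π ω) = etaWord cs ω := by
  induction ω with
  | nil => simp [etaWord]
  | cons i ω ih =>
      rw [cs.wordProd_cons, map_mul, theta_simple, ih, etaWord_cons]

/-- The sign of `w` in `theta v`. -/
noncomputable def sgn (v w : W) : ℤˣ := (theta cs v (w, 1)).2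

theorem theta_apply (v w : W) (ε : ℤˣ) :
    theta cs v (w, ε) = (v * w * v⁻¹, ε * sgn cs v w) := by
  obtain ⟨ω, rfl⟩ := cs.wordProd_surjective v
  simp only [sgn, theta_wordProd, etaWord_apply, one_mul]

theorem sgn_eq_count (v w : W) (ω : List B) (hω : π ω = v) :
    sgn cs v w = (-1) ^ (List.count w (cs.rightInvSeq ω)) := by
  rw [sgn, ← hω, theta_wordProd, etaWord_apply, one_mul]

theorem theta_refl_self {t : W} (ht : cs.IsReflection t) :
    theta cs t (t, 1) = (t, -1) := by
  obtain ⟨u, i, rfl⟩ := ht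
  have hconj : u⁻¹ * (u * σ i * u⁻¹) * u⁻¹⁻¹ = σ i := by group
  have h1 : theta cs u⁻¹ (u * σ i * u⁻¹, 1)
      = (σ i, 1 * sgn cs u⁻¹ (u * σ i * u⁻¹)) := by
    rw [theta_apply, hconj]
  rw [one_mul] at h1
  have h2 : ∀ x : ℤˣ, theta cs (σ i) ((σ i : W), x) = ((σ i : W), -x) := by
    intro x
    rw [theta_simple, eta_apply, if_pos rfl]
    congr 1
    simp
  have h3 : ∀ x : ℤˣ, theta cs u ((σ i : W), x)
      = (u * σ i * u⁻¹, x * sgn cs u (σ i)) := fun x => theta_apply cs u (σ i) x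
  have hid : theta cs u (theta cs u⁻¹ (u * σ i * u⁻¹, 1)) = (u * σ i * u⁻¹, 1) := by
    rw [← Equiv.Perm.mul_apply, ← map_mul, mul_inv_cancel]
    simp
  rw [h1, h3] at hid
  have hc : sgn cs u⁻¹ (u * σ i * u⁻¹) * sgn cs u (σ i) = 1 :=
    congrArg Prod.snd hid
  have hsplit : theta cs (u * σ i * u⁻¹) (u * σ i * u⁻¹, 1)
      = theta cs u (theta cs (σ i) (theta cs u⁻¹ (u * σ i * u⁻¹, 1))) := by
    rw [← Equiv.Perm.mul_apply, ← Equiv.Perm.mul_apply, ← map_mul, ← map_mul]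
  rw [hsplit, h1, h2, h3, Prod.mk.injEq]
  refine ⟨rfl, ?_⟩
  rw [neg_mul, hc]

theorem mem_rightInvSeq_of_lt {v t : W} (ht : cs.IsReflection t)
    {ω : List B} (hω : cs.IsReduced ω) (hπ : π ω = v)
    (hlt : ℓ (v * t) < ℓ v) : t ∈ cs.rightInvSeq ω := by
  have hsgn : sgn cs v t = (-1) ^ (List.count t (cs.rightInvSeq ω)) :=
    sgn_eq_count cs v t ω hπ
  have hodd : Odd (List.count t (cs.rightInvSeq ω)) := by
    by_contra h
    have heven : Even (List.count t (cs.rightInvSeq ω)) :=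
      Nat.not_odd_iff_even.mp h
    have h1 : sgn cs v t = 1 := by rw [hsgn]; exact heven.neg_one_pow
    obtain ⟨ω', hω', hπ'⟩ := cs.exists_reduced_word' (v * t)
    have h3 : theta cs (v * t) (t, 1) = theta cs v (theta cs t (t, 1)) := by
      rw [← Equiv.Perm.mul_apply, ← map_mul]
    rw [theta_refl_self cs ht] at h3
    have h5 : sgn cs (v * t) t = -1 := by
      have hl : theta cs (v * t) (t, 1)
          = ((v * t) * t * (v * t)⁻¹, 1 * sgn cs (v * t) t) :=
        theta_apply cs (v * t) t 1
      have hr : theta cs v (t, -1) = (v * t * v⁻¹, -1 * sgn cs v t) :=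
        theta_apply cs v t (-1)
      rw [hl, hr, h1] at h3
      have hsnd := congrArg Prod.snd h3
      simpa using hsnd
    have hcnt : Odd (List.count t (cs.rightInvSeq ω')) := by
      have hh := sgn_eq_count cs (v * t) t ω' hπ'.symm
      rw [h5] at hh
      by_contra hodd'
      have : Even (List.count t (cs.rightInvSeq ω')) := Nat.not_odd_iff_even.mp hodd'
      rw [this.neg_one_pow] at hh
      exact (by decide : ¬((-1 : ℤˣ) = 1)) hh
    have hmem : t ∈ cs.rightInvSeq ω' := by
      rcases hcnt with ⟨c, hc⟩
      have : 0 < List.count t (cs.rightInvSeq ω') := by omega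
      exact List.count_pos_iff.mp this
    have hinv := cs.isRightInversion_of_mem_rightInvSeq hω' hmem
    have hvt : π ω' * t = v := by
      rw [← hπ', mul_assoc, ht.mul_self, mul_one]
    have : ℓ v < ℓ (v * t) := by
      have h6 := hinv.2
      rwa [hvt, ← hπ'] at h6
    omega
  rcases hodd with ⟨c, hc⟩
  have : 0 < List.count t (cs.rightInvSeq ω) := by omega
  exact List.count_pos_iff.mp this

theorem mem_leftInvSeq_of_lt {v t : W} (ht : cs.IsReflection t)
    {ω : List B} (hω : cs.IsReduced ω) (hπ : π ω = v)
    (hlt : ℓ (t * v) < ℓ v) : t ∈ cs.leftInvSeq ω := by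
  have h1 : ℓ (v⁻¹ * t) < ℓ v⁻¹ := by
    have he : v⁻¹ * t = (t * v)⁻¹ := by
      rw [mul_inv_rev, ht.inv]
    rw [he, cs.length_inv, cs.length_inv]
    exact hlt
  have h2 : π (ω.reverse) = v⁻¹ := by rw [cs.wordProd_reverse, hπ]
  have h3 := mem_rightInvSeq_of_lt cs ht
    ((cs.isReduced_reverse_iff ω).mpr hω) h2 h1
  rw [cs.rightInvSeq_reverse] at h3
  exact List.mem_reverse.mp h3

theorem exists_eraseIdx_of_right_descent {v : W} {ω : List B}
    (hω : cs.IsReduced ω) (hπ : π ω = v) {t : W} (ht : cs.IsReflection t)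
    (hlt : ℓ (v * t) < ℓ v) :
    ∃ k, k < ω.length ∧ v * t = π (ω.eraseIdx k) := by
  have hmem := mem_rightInvSeq_of_lt cs ht hω hπ hlt
  obtain ⟨k, hk, hget⟩ := List.mem_iff_getElem.mp hmem
  have hk' : k < ω.length := by
    have := cs.length_rightInvSeq ω
    omega
  refine ⟨k, hk', ?_⟩
  have h1 := cs.wordProd_mul_getD_rightInvSeq ω k
  rw [List.getD_eq_getElem _ 1 hk, hget, hπ] at h1
  exact h1

/-! ### Parabolic subgroups and reduced words -/

theorem wordProd_mem_parabolic {K : Finset B} {ω : List B} (hω : ∀ b ∈ ω, b ∈ K) :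
    π ω ∈ parabolic cs K := by
  induction ω with
  | nil => rw [cs.wordProd_nil]; exact one_mem _
  | cons i ω ih =>
      rw [cs.wordProd_cons]
      refine mul_mem ?_ (ih fun b hb => hω b (List.mem_cons_of_mem i hb))
      exact Subgroup.subset_closure ⟨i, by simpa using hω i List.mem_cons_self, rfl⟩

theorem exists_reduced_K_word {K : Finset B} {ω : List B} (hω : ∀ b ∈ ω, b ∈ K) :
    ∃ ω' : List B, (∀ b ∈ ω', b ∈ K) ∧ cs.IsReduced ω' ∧ π ω' = π ω := by
  generalize hl : ω.length = n
  induction n using Nat.strong_induction_on generalizing ω with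
  | _ n ih =>
    by_cases hred : cs.IsReduced ω
    · exact ⟨ω, hω, hred, rfl⟩
    · have hne : ω ≠ [] := by
        rintro rfl
        exact hred (by simp [CoxeterSystem.IsReduced])
      have hn1 : 1 ≤ n := by
        rw [← hl]
        exact List.length_pos_iff.mpr hne
      have hex : ∃ k, ¬ cs.IsReduced (ω.take (k + 1)) := by
        refine ⟨n - 1, ?_⟩
        have : ω.take (n - 1 + 1) = ω := by
          apply List.take_of_length_le
          omega
        rwa [this]
      set k := Nat.find hex with hkdef
      have hk : ¬ cs.IsReduced (ω.take (k + 1)) := Nat.find_spec hex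
      have hkred : cs.IsReduced (ω.take k) := by
        rcases Nat.eq_zero_or_pos k with h0 | hpos
        · rw [h0]
          simp [CoxeterSystem.IsReduced]
        · have h := not_not.mp (Nat.find_min hex (m := k - 1) (by omega))
          rwa [Nat.sub_add_cancel hpos] at h
      have hkn : k < n := by
        have : k ≤ n - 1 := Nat.find_le (by
          have h2 : ω.take (n - 1 + 1) = ω := by
            apply List.take_of_length_le
            omega
          rwa [h2])
        omega
      have hkl : k < ω.length := by omega
      have htake : ω.take (k + 1) = ω.take k ++ [ω[k]] := by
        rw [List.take_succ, List.getElem?_eq_getElem hkl]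
        rfl
      have hlen_take : (ω.take k).length = k := by
        rw [List.length_take]
        omega
      have hℓtake : ℓ (π (ω.take k)) = k := by
        rw [hkred]
        exact hlen_take
      have hdesc : ℓ (π (ω.take k) * σ (ω[k])) < ℓ (π (ω.take k)) := by
        have h1 : π (ω.take (k + 1)) = π (ω.take k) * σ (ω[k]) := by
          rw [htake, cs.wordProd_append, cs.wordProd_singleton]
        have h2 : ℓ (π (ω.take (k + 1))) ≠ (ω.take (k + 1)).length := fun h => hk h
        have h3 : (ω.take (k + 1)).length = k + 1 := by
          rw [List.length_take]
          omega
        rcases cs.length_mul_simple (π (ω.take k)) (ω[k]) with h4 | h4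
        · exfalso
          apply h2
          rw [h1, h4, hℓtake, h3]
        · omega
      obtain ⟨m, hm, herase⟩ := exists_eraseIdx_of_right_descent cs hkred rfl
        (cs.isReflection_simple (ω[k])) hdesc
      set ω₂ := ((ω.take k).eraseIdx m) ++ ω.drop (k + 1) with hω₂
      have hπ₂ : π ω₂ = π ω := by
        rw [hω₂, cs.wordProd_append, ← herase]
        have : π (ω.take (k + 1)) * π (ω.drop (k + 1)) = π ω := by
          rw [← cs.wordProd_append, List.take_append_drop]
        rw [← this, htake, cs.wordProd_append, cs.wordProd_singleton]
      have hmem₂ : ∀ b ∈ ω₂, b ∈ K := by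
        intro b hb
        rcases List.mem_append.mp hb with h | h
        · exact hω b (List.take_subset k ω (List.mem_of_mem_eraseIdx h))
        · exact hω b (List.drop_subset (k + 1) ω h)
      have hlen₂ : ω₂.length < n := by
        rw [hω₂, List.length_append, List.length_eraseIdx]
        rw [if_pos (by omega : m < (ω.take k).length), hlen_take, List.length_drop]
        omega
      obtain ⟨ω', h1, h2, h3⟩ := ih ω₂.length hlen₂ hmem₂ rfl
      exact ⟨ω', h1, h2, h3.trans hπ₂⟩

theorem mem_parabolic_iff {K : Finset B} {u : W} (hu : u ∈ parabolic cs K) :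
    ∃ ω : List B, (∀ b ∈ ω, b ∈ K) ∧ cs.IsReduced ω ∧ π ω = u := by
  have hword : ∃ ω : List B, (∀ b ∈ ω, b ∈ K) ∧ π ω = u := by
    induction hu using Subgroup.closure_induction with
    | mem x hx =>
        obtain ⟨i, hi, rfl⟩ := hx
        exact ⟨[i], by simpa using hi, by simp⟩
    | one => exact ⟨[], by simp, by simp⟩
    | mul x y hx hy ihx ihy =>
        obtain ⟨ω₁, h1, h2⟩ := ihx
        obtain ⟨ω₂, h3, h4⟩ := ihy
        refine ⟨ω₁ ++ ω₂, ?_, by rw [cs.wordProd_append, h2, h4]⟩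
        intro b hb
        rcases List.mem_append.mp hb with h | h
        · exact h1 b h
        · exact h3 b h
    | inv x hx ihx =>
        obtain ⟨ω₁, h1, h2⟩ := ihx
        exact ⟨ω₁.reverse, fun b hb => h1 b (List.mem_reverse.mp hb),
          by rw [cs.wordProd_reverse, h2]⟩
  obtain ⟨ω, h1, h2⟩ := hword
  obtain ⟨ω', h3, h4, h5⟩ := exists_reduced_K_word cs h1
  exact ⟨ω', h3, h4, h5.trans h2⟩

theorem parabolic_mono {K K' : Finset B} (h : K ⊆ K') :
    parabolic cs K ≤ parabolic cs K' := by
  apply Subgroup.closure_mono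
  intro x hx
  obtain ⟨i, hi, rfl⟩ := hx
  exact ⟨i, by simpa using h (by simpa using hi), rfl⟩


/-! ### Coset decompositions -/

theorem exists_min_coset_decomp (K : Finset B) (w : W) :
    ∃ (x : W) (ω : List B), w = x * π ω ∧ (∀ b ∈ ω, b ∈ K) ∧
      ℓ w = ℓ x + ω.length ∧ (∀ j ∈ K, ℓ x < ℓ (x * σ j)) := by
  generalize hl : ℓ w = n
  induction n using Nat.strong_induction_on generalizing w with
  | _ n ih =>
    by_cases hx : ∀ j ∈ K, ℓ w < ℓ (w * σ j)
    · exact ⟨w, [], by simp, by simp, by simp [hl], hx⟩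
    · push_neg at hx
      obtain ⟨j, hjK, hj⟩ := hx
      have hlt : ℓ (w * σ j) < ℓ w :=
        lt_of_le_of_ne hj (cs.length_mul_simple_ne w j)
      obtain ⟨x, ω, h1, h2, h3, h4⟩ := ih (ℓ (w * σ j)) (by omega) (w * σ j) rfl
      have hw : ℓ w = ℓ (w * σ j) + 1 := by
        rcases cs.length_mul_simple w j with h | h
        · omega
        · omega
      refine ⟨x, ω ++ [j], ?_, ?_, ?_, h4⟩
      · rw [cs.wordProd_append, cs.wordProd_singleton, ← mul_assoc, ← h1]
        simp
      · intro b hb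
        rcases List.mem_append.mp hb with h | h
        · exact h2 b h
        · rw [List.mem_singleton.mp h]
          exact hjK
      · rw [List.length_append, List.length_singleton]
        omega

theorem length_mul_of_min {K : Finset B} {x : W}
    (hx : ∀ j ∈ K, ℓ x < ℓ (x * σ j))
    {u : W} (hu : u ∈ parabolic cs K) : ℓ (x * u) = ℓ x + ℓ u := by
  generalize hxl : ℓ x = n
  induction n using Nat.strong_induction_on generalizing x u with
  | _ n ih =>
    obtain ⟨ωu, hωuK, hωured, hπu⟩ := mem_parabolic_iff cs hu
    obtain ⟨ωx, hωxred, hπx⟩ := cs.exists_reduced_word' x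
    set ω := ωx ++ ωu with hω
    have hπω : π ω = x * u := by
      rw [hω, cs.wordProd_append, ← hπx, hπu]
    by_cases hred : cs.IsReduced ω
    · have h1 : ℓ (x * u) = ωx.length + ωu.length := by
        rw [← hπω, hred, hω, List.length_append]
      have h2 : ωx.length = n := by
        have h : ℓ (π ωx) = ωx.length := hωxred
        rw [← hπx] at h
        omega
      have h3 : ωu.length = ℓ u := by
        have h : ℓ (π ωu) = ωu.length := hωured
        rw [hπu] at h
        omega
      omega
    · exfalso
      have hlenx : ωx.length = n := by
        have h : ℓ (π ωx) = ωx.length := hωxred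
        rw [← hπx] at h
        omega
      have hlenu : ωu.length = ℓ u := by
        have h : ℓ (π ωu) = ωu.length := hωured
        rw [hπu] at h
        omega
      have hne : ω ≠ [] := by
        rintro habs
        exact hred (by simp [habs, CoxeterSystem.IsReduced])
      have hex : ∃ k, ¬ cs.IsReduced (ω.take (k + 1)) := by
        refine ⟨ω.length - 1, ?_⟩
        have h2 : ω.take (ω.length - 1 + 1) = ω := by
          apply List.take_of_length_le
          have := List.length_pos_iff.mpr hne
          omega
        rwa [h2]
      set k := Nat.find hex with hkdef
      have hk : ¬ cs.IsReduced (ω.take (k + 1)) := Nat.find_spec hex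
      have hkred : cs.IsReduced (ω.take k) := by
        rcases Nat.eq_zero_or_pos k with h0 | hpos
        · rw [h0]
          simp [CoxeterSystem.IsReduced]
        · have h := not_not.mp (Nat.find_min hex (m := k - 1) (by omega))
          rwa [Nat.sub_add_cancel hpos] at h
      have hkn : k < ω.length := by
        have h5 : k ≤ ω.length - 1 := Nat.find_le (by
          have h2 : ω.take (ω.length - 1 + 1) = ω := by
            apply List.take_of_length_le
            have := List.length_pos_iff.mpr hne
            omega
          rwa [h2])
        have := List.length_pos_iff.mpr hne
        omega
      -- k is at least the length of ωx
      have hxk : ωx.length ≤ k := by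
        by_contra habs
        push_neg at habs
        have h6 : ω.take (k + 1) = ωx.take (k + 1) := by
          rw [hω]
          exact List.take_append_of_le_length (by omega)
        exact hk (by rw [h6]; exact CoxeterSystem.IsReduced.take hωxred (k + 1))
      set k₀ := k - ωx.length with hk₀
      have hk₀u : k₀ < ωu.length := by
        have : ω.length = ωx.length + ωu.length := by rw [hω, List.length_append]
        omega
      have htakek : ω.take k = ωx ++ ωu.take k₀ := by
        rw [hω, List.take_append, List.take_of_length_le (by omega)]
      have hgetk : ω[k]'hkn = ωu[k₀]'hk₀u := List.getElem_append_right hxk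
      have hlen_take : (ω.take k).length = k := by
        rw [List.length_take]
        omega
      have hℓtake : ℓ (π (ω.take k)) = k := by
        rw [hkred]
        exact hlen_take
      have htake1 : ω.take (k + 1) = ω.take k ++ [ω[k]'hkn] := by
        rw [List.take_succ, List.getElem?_eq_getElem hkn]
        rfl
      have hdesc : ℓ (π (ω.take k) * σ (ω[k]'hkn)) < ℓ (π (ω.take k)) := by
        have h1 : π (ω.take (k + 1)) = π (ω.take k) * σ (ω[k]'hkn) := by
          rw [htake1, cs.wordProd_append, cs.wordProd_singleton]
        have h2 : ℓ (π (ω.take (k + 1))) ≠ (ω.take (k + 1)).length := fun h => hk h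
        have h3 : (ω.take (k + 1)).length = k + 1 := by
          rw [List.length_take]
          omega
        rcases cs.length_mul_simple (π (ω.take k)) (ω[k]'hkn) with h4 | h4
        · exact absurd (by rw [h1, h4, hℓtake, h3] : _) h2
        · omega
      obtain ⟨m, hm, herase⟩ := exists_eraseIdx_of_right_descent cs hkred rfl
        (cs.isReflection_simple (ω[k]'hkn)) hdesc
      rw [hlen_take] at hm
      by_cases hmx : ωx.length ≤ m
      · -- erased inside the u part: contradicts reducedness of ωu
        set m₀ := m - ωx.length with hm₀
        have hm₀u : m₀ < (ωu.take k₀).length := by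
          rw [List.length_take]
          omega
        have herase2 : (ωx ++ ωu.take k₀).eraseIdx m = ωx ++ (ωu.take k₀).eraseIdx m₀ :=
          List.eraseIdx_append_of_length_le hmx _
        have heq : π (ωu.take k₀) * σ (ωu[k₀]'hk₀u) = π ((ωu.take k₀).eraseIdx m₀) := by
          have h20 := herase
          rw [htakek, hgetk, herase2, cs.wordProd_append, cs.wordProd_append,
            mul_assoc] at h20
          exact mul_left_cancel h20
        have hured1 : cs.IsReduced (ωu.take (k₀ + 1)) := CoxeterSystem.IsReduced.take hωured (k₀ + 1)
        have h8 : ωu.take (k₀ + 1) = ωu.take k₀ ++ [ωu[k₀]'hk₀u] := by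
          rw [List.take_succ, List.getElem?_eq_getElem hk₀u]
          rfl
        have h9 : ℓ (π (ωu.take (k₀ + 1))) ≤ k₀ - 1 := by
          rw [h8, cs.wordProd_append, cs.wordProd_singleton, heq]
          calc ℓ (π ((ωu.take k₀).eraseIdx m₀)) ≤ ((ωu.take k₀).eraseIdx m₀).length :=
                cs.length_wordProd_le _
            _ ≤ k₀ - 1 := by
                rw [List.length_eraseIdx, if_pos hm₀u, List.length_take]
                omega
        have h10 : (ωu.take (k₀ + 1)).length = k₀ + 1 := by
          rw [List.length_take]
          omega
        rw [hured1, h10] at h9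
        omega
      · -- erased inside the x part
        push_neg at hmx
        have herase2 : (ωx ++ ωu.take k₀).eraseIdx m = ωx.eraseIdx m ++ ωu.take k₀ :=
          List.eraseIdx_append_of_lt_length hmx _
        set y := π (ωx.eraseIdx m) with hy
        set α := π (ωu.take k₀) with hα
        set c := ωu[k₀]'hk₀u with hc
        have heq : x * (α * σ c) = y * α := by
          have h20 := herase
          rw [htakek, hgetk, herase2, cs.wordProd_append, cs.wordProd_append,
            mul_assoc] at h20
          rw [hπx]
          exact h20
        have hxyv : x = y * (α * σ c * α⁻¹) := by
          have h11 : y * (α * σ c * α⁻¹) = (y * α) * (σ c * α⁻¹) := by group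
          rw [h11, ← heq, mul_assoc, mul_assoc]
          simp [← mul_assoc]
        have hv : α * σ c * α⁻¹ ∈ parabolic cs K := by
          have hα1 : α ∈ parabolic cs K := by
            apply wordProd_mem_parabolic
            intro b hb
            exact hωuK b (List.take_subset k₀ ωu hb)
          have hc1 : σ c ∈ parabolic cs K := by
            apply Subgroup.subset_closure
            exact ⟨c, by simpa using hωuK c (List.getElem_mem hk₀u), rfl⟩
          exact mul_mem (mul_mem hα1 hc1) (inv_mem hα1)
        have hylt : ℓ y < n := by
          have h12 : ℓ y ≤ (ωx.eraseIdx m).length := cs.length_wordProd_le _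
          rw [List.length_eraseIdx, if_pos hmx] at h12
          omega
        obtain ⟨z, β, hy1, hβ, hy2, hz⟩ := exists_min_coset_decomp cs K y
        have hzn : ℓ z ≤ ℓ y := by omega
        set u' := π β * (α * σ c * α⁻¹) with hu'def
        have hu' : u' ∈ parabolic cs K :=
          mul_mem (wordProd_mem_parabolic cs hβ) hv
        have hxz : x = z * u' := by
          rw [hxyv, hy1, mul_assoc]
        have h12 : ℓ x = ℓ z + ℓ u' := by
          rw [hxz]
          exact ih (ℓ z) (by omega) hz hu' rfl
        have h13 : 1 ≤ ℓ u' := by omega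
        obtain ⟨γ, hγK, hγred, hγπ⟩ := mem_parabolic_iff cs hu'
        have hγlen : γ.length = ℓ u' := by
          have h : ℓ (π γ) = γ.length := hγred
          rw [hγπ] at h
          omega
        have hγne : γ ≠ [] := by
          apply List.ne_nil_of_length_pos
          omega
        set j := γ.getLast hγne with hj
        have hjK : j ∈ K := hγK j (List.getLast_mem hγne)
        have hγsplit : γ.dropLast ++ [j] = γ := List.dropLast_append_getLast hγne
        have h14 : x * σ j = z * π γ.dropLast := by
          rw [hxz, ← hγπ, ← hγsplit, cs.wordProd_append, cs.wordProd_singleton]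
          simp [mul_assoc]
        have h15 : ℓ (x * σ j) < ℓ x := by
          calc ℓ (x * σ j) = ℓ (z * π γ.dropLast) := by rw [h14]
            _ ≤ ℓ z + ℓ (π γ.dropLast) := cs.length_mul_le _ _
            _ ≤ ℓ z + γ.dropLast.length := by
                have := cs.length_wordProd_le γ.dropLast
                omega
            _ < ℓ x := by
                rw [List.length_dropLast]
                omega
        have := hx j hjK
        omega

theorem min_coset_unique {K : Finset B} {x y : W}
    (hx : ∀ j ∈ K, ℓ x < ℓ (x * σ j)) (hy : ∀ j ∈ K, ℓ y < ℓ (y * σ j))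
    (hxy : x⁻¹ * y ∈ parabolic cs K) : x = y := by
  have h1 : ℓ (x * (x⁻¹ * y)) = ℓ x + ℓ (x⁻¹ * y) := length_mul_of_min cs hx hxy
  rw [mul_inv_cancel_left] at h1
  have hxy' : y⁻¹ * x ∈ parabolic cs K := by
    have : y⁻¹ * x = (x⁻¹ * y)⁻¹ := by group
    rw [this]
    exact inv_mem hxy
  have h2 : ℓ (y * (y⁻¹ * x)) = ℓ y + ℓ (y⁻¹ * x) := length_mul_of_min cs hy hxy'
  rw [mul_inv_cancel_left] at h2
  have h3 : ℓ (y⁻¹ * x) = ℓ (x⁻¹ * y) := by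
    have : y⁻¹ * x = (x⁻¹ * y)⁻¹ := by group
    rw [this, cs.length_inv]
  have h4 : ℓ (x⁻¹ * y) = 0 := by omega
  have h5 : x⁻¹ * y = 1 := cs.length_eq_zero_iff.mp h4
  have := congrArg (fun z => x * z) h5
  simpa using this.symm

theorem conj_simple_of_min {K : Finset B} {x : W}
    (hx : ∀ j ∈ K, ℓ x < ℓ (x * σ j)) {i : B}
    (hv : x⁻¹ * σ i * x ∈ parabolic cs K) :
    ∃ j ∈ K, x⁻¹ * σ i * x = σ j := by
  set v := x⁻¹ * σ i * x with hvdef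
  have hxv : x * v = σ i * x := by
    rw [hvdef]
    group
  have hadd : ℓ (x * v) = ℓ x + ℓ v := length_mul_of_min cs hx hv
  have hle : ℓ (σ i * x) ≤ ℓ x + 1 := by
    rcases cs.length_simple_mul x i with h | h
    · omega
    · omega
  have hv1 : ℓ v ≤ 1 := by
    rw [hxv] at hadd
    omega
  have hne : v ≠ 1 := by
    intro h
    rw [h, mul_one] at hxv
    have : σ i = 1 := by
      have := congrArg (fun z => z * x⁻¹) hxv
      simpa using this.symm
    have h2 := cs.length_simple i
    rw [this, cs.length_one] at h2
    omega
  have hv2 : ℓ v = 1 := by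
    rcases Nat.eq_zero_or_pos (ℓ v) with h | h
    · exact absurd (cs.length_eq_zero_iff.mp h) hne
    · omega
  obtain ⟨ω, hωK, hωred, hπ⟩ := mem_parabolic_iff cs hv
  have hωlen : ω.length = 1 := by
    have h : ℓ (π ω) = ω.length := hωred
    rw [hπ, hv2] at h
    omega
  obtain ⟨j, rfl⟩ := List.length_eq_one_iff.mp hωlen
  refine ⟨j, hωK j (List.mem_singleton_self j), ?_⟩
  rw [← hπ, cs.wordProd_singleton]

theorem conj_mem_parabolic_of_left_descent {K : Finset B} {x u : W}
    (hx : ∀ j ∈ K, ℓ x < ℓ (x * σ j)) (hu : u ∈ parabolic cs K)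
    {i : B} (hi : ℓ x < ℓ (σ i * x)) (hlt : ℓ (σ i * (x * u)) < ℓ (x * u)) :
    x⁻¹ * σ i * x ∈ parabolic cs K := by
  obtain ⟨ωu, hωuK, hωured, hπu⟩ := mem_parabolic_iff cs hu
  obtain ⟨ωx, hωxred, hπx⟩ := cs.exists_reduced_word' x
  have hadd : ℓ (x * u) = ℓ x + ℓ u := length_mul_of_min cs hx hu
  have hπc : π (ωx ++ ωu) = x * u := by
    rw [cs.wordProd_append, ← hπx, hπu]
  have hconc : cs.IsReduced (ωx ++ ωu) := by
    show ℓ (π (ωx ++ ωu)) = (ωx ++ ωu).length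
    rw [hπc, List.length_append, hadd]
    have h1 : ℓ (π ωx) = ωx.length := hωxred
    have h2 : ℓ (π ωu) = ωu.length := hωured
    rw [← hπx] at h1
    rw [hπu] at h2
    omega
  have hmem := mem_leftInvSeq_of_lt cs (cs.isReflection_simple i) hconc hπc hlt
  obtain ⟨p, hp, hget⟩ := List.mem_iff_getElem.mp hmem
  have hplen : p < (ωx ++ ωu).length := by
    have := cs.length_leftInvSeq (ωx ++ ωu)
    omega
  have hgd : (cs.leftInvSeq (ωx ++ ωu)).getD p 1 = σ i := by
    rw [List.getD_eq_getElem _ 1 hp, hget]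
  rw [cs.getD_leftInvSeq] at hgd
  by_cases hp2 : p < ωx.length
  · exfalso
    have htk : (ωx ++ ωu).take p = ωx.take p := List.take_append_of_le_length (by omega)
    have hgp : (ωx ++ ωu)[p]? = ωx[p]? := by
      rw [List.getElem?_append_left hp2]
    have hgd2 : (cs.leftInvSeq ωx).getD p 1 = σ i := by
      rw [cs.getD_leftInvSeq, ← htk, ← hgp]
      exact hgd
    have hmem2 : σ i ∈ cs.leftInvSeq ωx := by
      have hplis : p < (cs.leftInvSeq ωx).length := by
        rw [cs.length_leftInvSeq]
        exact hp2
      rw [← hgd2, List.getD_eq_getElem _ 1 hplis]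
      exact List.getElem_mem hplis
    have hinv := cs.isLeftInversion_of_mem_leftInvSeq hωxred hmem2
    have := hinv.2
    rw [← hπx] at this
    omega
  · push_neg at hp2
    set p₀ := p - ωx.length with hp₀
    have hp₀u : p₀ < ωu.length := by
      rw [List.length_append] at hplen
      omega
    have htk : (ωx ++ ωu).take p = ωx ++ ωu.take p₀ := by
      rw [List.take_append, List.take_of_length_le (by omega)]
    have hgp : (ωx ++ ωu)[p]? = ωu[p₀]? := by
      rw [List.getElem?_append_right hp2]
    rw [htk, hgp, cs.wordProd_append, ← hπx,
      List.getElem?_eq_getElem hp₀u] at hgd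
    simp only [Option.map_some, Option.getD_some] at hgd
    have hxi : x⁻¹ * σ i * x
        = π (ωu.take p₀) * σ (ωu[p₀]'hp₀u) * (π (ωu.take p₀))⁻¹ := by
      rw [← hgd]
      simp only [mul_inv_rev]
      group
    rw [hxi]
    have hα : π (ωu.take p₀) ∈ parabolic cs K := by
      apply wordProd_mem_parabolic
      intro b hb
      exact hωuK b (List.take_subset p₀ ωu hb)
    have hc : σ (ωu[p₀]'hp₀u) ∈ parabolic cs K := by
      apply Subgroup.subset_closure
      exact ⟨ωu[p₀]'hp₀u, by simpa using hωuK _ (List.getElem_mem hp₀u), rfl⟩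
    exact mul_mem (mul_mem hα hc) (inv_mem hα)

/-! ### Consequences of membership in `T(J,δ)` -/

section Main

variable {δW : W ≃* W} {δb : B ≃ B} {J : Finset B} {Js : ℕ → Finset B} {ws : ℕ → W}

theorem Js_succ_subset (h : InT cs δW δb J Js ws) (n : ℕ) : Js (n + 1) ⊆ Js n :=
  fun i hi => ((h.2.2.1 n i).mp hi).1

theorem Js_subset (h : InT cs δW δb J Js ws) {n m : ℕ} (hnm : n ≤ m) :
    Js m ⊆ Js n := by
  induction m, hnm using Nat.le_induction with
  | base => exact Finset.Subset.refl _
  | succ m hm ih => exact (Js_succ_subset cs h m).trans ih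

theorem Js_subset_J (h : InT cs δW δb J Js ws) (n : ℕ) : Js n ⊆ J := by
  have := Js_subset cs h (Nat.zero_le n)
  rwa [h.1] at this

theorem prod_mem_parabolic (h : InT cs δW δb J Js ws) {n m : ℕ} (hnm : n ≤ m) :
    (ws n)⁻¹ * ws m ∈ parabolic cs (Js n) := by
  induction m, hnm using Nat.le_induction with
  | base => simpa using one_mem _
  | succ m hm ih =>
      have h1 : (ws m)⁻¹ * ws (m + 1) ∈ parabolic cs (Js m) := h.2.2.2 m
      have h2 : (ws m)⁻¹ * ws (m + 1) ∈ parabolic cs (Js n) :=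
        parabolic_mono cs (Js_subset cs h hm) h1
      have h3 : (ws n)⁻¹ * ws (m + 1)
          = ((ws n)⁻¹ * ws m) * ((ws m)⁻¹ * ws (m + 1)) := by group
      rw [h3]
      exact mul_mem ih h2

theorem length_ws_succ (h : InT cs δW δb J Js ws) (n : ℕ) :
    ℓ (ws (n + 1)) = ℓ (ws n) + ℓ ((ws n)⁻¹ * ws (n + 1)) := by
  have h1 := length_mul_of_min cs (h.2.1 n).2 (h.2.2.2 n)
  rwa [mul_inv_cancel_left] at h1

theorem length_ws_mono (h : InT cs δW δb J Js ws) {n m : ℕ} (hnm : n ≤ m) :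
    ℓ (ws n) ≤ ℓ (ws m) := by
  induction m, hnm using Nat.le_induction with
  | base => exact le_refl _
  | succ m hm ih =>
      have := length_ws_succ cs h m
      omega

theorem ws_stabilizes (h : InT cs δW δb J Js ws)
    (hJfin : Finite (parabolic cs J)) : ∃ N, ∀ n, N ≤ n → ws n = ws N := by
  -- lengths are bounded
  have hfin : ((parabolic cs J : Subgroup W) : Set W).Finite :=
    Set.finite_coe_iff.mp hJfin
  have himg : (cs.length '' ((parabolic cs J : Subgroup W) : Set W)).Finite :=
    hfin.image _
  have hbdd : BddAbove (cs.length '' ((parabolic cs J : Subgroup W) : Set W)) :=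
    himg.bddAbove
  obtain ⟨C, hC⟩ := hbdd
  have hbound : ∀ n, ℓ (ws n) ≤ ℓ (ws 0) + C := by
    intro n
    have h1 : (ws 0)⁻¹ * ws n ∈ parabolic cs J := by
      have := prod_mem_parabolic cs h (Nat.zero_le n)
      rwa [h.1] at this
    have h2 : ℓ ((ws 0)⁻¹ * ws n) ≤ C := hC ⟨(ws 0)⁻¹ * ws n, h1, rfl⟩
    have h3 : ws n = ws 0 * ((ws 0)⁻¹ * ws n) := by group
    calc ℓ (ws n) = ℓ (ws 0 * ((ws 0)⁻¹ * ws n)) := by rw [← h3]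
      _ ≤ ℓ (ws 0) + ℓ ((ws 0)⁻¹ * ws n) := cs.length_mul_le _ _
      _ ≤ ℓ (ws 0) + C := by omega
  -- the set of lengths has a maximum
  set T := {k : ℕ | ∃ n, ℓ (ws n) = k} with hT
  have hTne : T.Nonempty := ⟨ℓ (ws 0), 0, rfl⟩
  have hTbdd : BddAbove T := by
    refine ⟨ℓ (ws 0) + C, ?_⟩
    rintro k ⟨n, rfl⟩
    exact hbound n
  have hmem := Nat.sSup_mem hTne hTbdd
  obtain ⟨N, hN⟩ := hmem
  refine ⟨N, ?_⟩
  intro n hn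
  induction n, hn using Nat.le_induction with
  | base => rfl
  | succ n hm ih =>
      have h1 : ℓ (ws (n + 1)) ≤ ℓ (ws N) := by
        rw [hN]
        exact le_csSup hTbdd ⟨n + 1, rfl⟩
      have h2 := length_ws_succ cs h n
      have h3 : ℓ (ws N) ≤ ℓ (ws n) := by rw [← ih]
      have h4 : ℓ ((ws n)⁻¹ * ws (n + 1)) = 0 := by omega
      have h5 : (ws n)⁻¹ * ws (n + 1) = 1 := cs.length_eq_zero_iff.mp h4
      have h6 : ws (n + 1) = ws n := by
        have := congrArg (fun z => ws n * z) h5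
        simpa using this
      rw [h6, ih]

theorem Q_invariant (h : InT cs δW δb J Js ws)
    (hδ : ∀ i : B, δW (cs.simple i) = cs.simple (δb i)) (n : ℕ) :
    ∀ i ∈ J, (ℓ (ws n) < ℓ (σ (δb i) * ws n)) ∧
      ((ws n)⁻¹ * σ (δb i) * ws n ∈ parabolic cs (Js n) → i ∈ Js n) := by
  induction n with
  | zero =>
      intro i hi
      have hi0 : i ∈ Js 0 := by rw [h.1]; exact hi
      constructor
      · exact (h.2.1 0).1 (δb i) (Finset.mem_image_of_mem δb hi0)
      · intro _
        exact hi0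
  | succ n ih =>
      intro i hi
      obtain ⟨ih1, ih2⟩ := ih i hi
      have hu : (ws n)⁻¹ * ws (n + 1) ∈ parabolic cs (Js n) := h.2.2.2 n
      have hxu : ws (n + 1) = ws n * ((ws n)⁻¹ * ws (n + 1)) := by group
      have hminx : ∀ j ∈ Js n, ℓ (ws n) < ℓ (ws n * σ j) := (h.2.1 n).2
      have step : (ws n)⁻¹ * σ (δb i) * ws n ∈ parabolic cs (Js n) → i ∈ Js (n + 1) := by
        intro hpar
        have hin : i ∈ Js n := ih2 hpar
        obtain ⟨j, hj, hconj⟩ := conj_simple_of_min cs hminx hpar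
        refine (h.2.2.1 n i).mpr ⟨hin, j, hj, ?_⟩
        rw [hδ i]
        have := congrArg (fun z => ws n * z * (ws n)⁻¹) hconj
        rw [← this]
        group
      constructor
      · rcases Nat.lt_or_ge (ℓ (σ (δb i) * ws (n + 1))) (ℓ (ws (n + 1))) with hlt | hge
        · exfalso
          rw [hxu] at hlt
          have ht := conj_mem_parabolic_of_left_descent cs hminx hu ih1 hlt
          have hi1 : i ∈ Js (n + 1) := step ht
          have := (h.2.1 (n + 1)).1 (δb i) (Finset.mem_image_of_mem δb hi1)
          rw [hxu] at this
          omega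
        · have hne := cs.length_simple_mul_ne (ws (n + 1)) (δb i)
          omega
      · intro hpar
        have h2 : (ws n)⁻¹ * σ (δb i) * ws n ∈ parabolic cs (Js n) := by
          have heq : (ws n)⁻¹ * σ (δb i) * ws n
              = ((ws n)⁻¹ * ws (n + 1))
                * ((ws (n + 1))⁻¹ * σ (δb i) * ws (n + 1))
                * ((ws n)⁻¹ * ws (n + 1))⁻¹ := by group
          rw [heq]
          exact mul_mem (mul_mem hu
            (parabolic_mono cs (Js_succ_subset cs h n) hpar)) (inv_mem hu)
        exact step h2

end Main

section Parts

variable {δW : W ≃* W} {δb : B ≃ B} {J : Finset B} {Js : ℕ → Finset B} {ws : ℕ → W}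

theorem part1 (hδ : ∀ i : B, δW (cs.simple i) = cs.simple (δb i))
    (hJfin : Finite (parabolic cs J)) (h : InT cs δW δb J Js ws) :
    ∃ v : W, EvVal ws v ∧ IsMinLeft cs (J.image δb) v := by
  obtain ⟨N, hN⟩ := ws_stabilizes cs h hJfin
  refine ⟨ws N, ⟨N, hN⟩, ?_⟩
  intro i' hi'
  obtain ⟨i, hiJ, rfl⟩ := Finset.mem_image.mp hi'
  exact (Q_invariant cs h hδ N i hiJ).1

theorem part2 {Js' : ℕ → Finset B} {ws' : ℕ → W} {v : W}
    (h : InT cs δW δb J Js ws) (h' : InT cs δW δb J Js' ws')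
    (hv : EvVal ws v) (hv' : EvVal ws' v) : Js = Js' ∧ ws = ws' := by
  obtain ⟨N1, hN1⟩ := hv
  obtain ⟨N2, hN2⟩ := hv'
  have key : ∀ n, Js n = Js' n → ws n = ws' n := by
    intro n hJn
    apply min_coset_unique cs (K := Js n) (h.2.1 n).2
      (fun j hj => (h'.2.1 n).2 j (hJn ▸ hj))
    have hm1 := prod_mem_parabolic cs h (le_max_left n (max N1 N2))
    have hm2 := prod_mem_parabolic cs h' (le_max_left n (max N1 N2))
    rw [hN1 _ (le_trans (le_max_left N1 N2) (le_max_right n _))] at hm1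
    rw [hN2 _ (le_trans (le_max_right N1 N2) (le_max_right n _))] at hm2
    rw [← hJn] at hm2
    have heq : (ws n)⁻¹ * ws' n = ((ws n)⁻¹ * v) * ((ws' n)⁻¹ * v)⁻¹ := by group
    rw [heq]
    exact mul_mem hm1 (inv_mem hm2)
  have hJall : ∀ n, Js n = Js' n := by
    intro n
    induction n with
    | zero => rw [h.1, h'.1]
    | succ n ih =>
        apply Finset.ext
        intro i
        rw [h.2.2.1 n i, h'.2.2.1 n i, ih, key n ih]
  exact ⟨funext hJall, funext fun n => key n (hJall n)⟩

theorem part3 (hδ : ∀ i : B, δW (cs.simple i) = cs.simple (δb i)) {v : W}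
    (hv : IsMinLeft cs (J.image δb) v) :
    ∃ Js ws, InT cs δW δb J Js ws ∧ EvVal ws v := by
  have hR : ∀ K : Finset B, ∃ x : W, x⁻¹ * v ∈ parabolic cs K ∧
      ∀ j ∈ K, ℓ x < ℓ (x * σ j) := by
    intro K
    obtain ⟨x, ω, h1, h2, _, h4⟩ := exists_min_coset_decomp cs K v
    refine ⟨x, ?_, h4⟩
    have hxv : x⁻¹ * v = π ω := by rw [h1]; group
    rw [hxv]
    exact wordProd_mem_parabolic cs h2
  obtain ⟨R, hRspec⟩ := Classical.axiomOfChoice hR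
  obtain ⟨F, hF0, hFsucc⟩ : ∃ F : ℕ → Finset B, F 0 = J ∧ ∀ n, F (n + 1)
      = (F n).filter
        (fun i => ∃ j ∈ F n, δW (cs.simple i) = R (F n) * cs.simple j * (R (F n))⁻¹) := by
    refine ⟨fun n => Nat.rec (motive := fun _ => Finset B) J
      (fun m Jm => Jm.filter
        (fun i => ∃ j ∈ Jm, δW (cs.simple i) = R Jm * cs.simple j * (R Jm)⁻¹)) n,
      rfl, fun n => rfl⟩
  have hanti : ∀ n, F (n + 1) ⊆ F n := by
    intro n
    rw [hFsucc n]
    exact Finset.filter_subset _ _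
  have hanti' : ∀ {a b : ℕ}, a ≤ b → F b ⊆ F a := by
    intro a b hab
    induction b, hab using Nat.le_induction with
    | base => exact Finset.Subset.refl _
    | succ b hb ih => exact (hanti b).trans ih
  have hFsub : ∀ n, F n ⊆ J := by
    intro n
    have := hanti' (Nat.zero_le n)
    rwa [hF0] at this
  have hInT : InT cs δW δb J F (fun n => R (F n)) := by
    refine ⟨hF0, ?_, ?_, ?_⟩
    · intro n
      constructor
      · intro i' hi'
        obtain ⟨i, hiF, rfl⟩ := Finset.mem_image.mp hi'
        rcases Nat.lt_or_ge (ℓ (R (F n))) (ℓ (σ (δb i) * R (F n))) with hlt | hge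
        · exact hlt
        · exfalso
          have hne := cs.length_simple_mul_ne (R (F n)) (δb i)
          have hlt2 : ℓ (σ (δb i) * R (F n)) < ℓ (R (F n)) := by omega
          have hadd : ℓ (R (F n) * ((R (F n))⁻¹ * v))
              = ℓ (R (F n)) + ℓ ((R (F n))⁻¹ * v) :=
            length_mul_of_min cs (hRspec (F n)).2 (hRspec (F n)).1
          rw [mul_inv_cancel_left] at hadd
          have hiJ : i ∈ J := hFsub n hiF
          have hmin := hv (δb i) (Finset.mem_image_of_mem δb hiJ)
          have hsv : σ (δb i) * v = (σ (δb i) * R (F n)) * ((R (F n))⁻¹ * v) := by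
            group
          have hle : ℓ (σ (δb i) * v)
              ≤ ℓ (σ (δb i) * R (F n)) + ℓ ((R (F n))⁻¹ * v) := by
            rw [hsv]
            exact cs.length_mul_le _ _
          omega
      · exact (hRspec (F n)).2
    · intro n i
      rw [hFsucc n, Finset.mem_filter]
    · intro n
      have h1 := (hRspec (F n)).1
      have h2 := (hRspec (F (n + 1))).1
      have h2' : (R (F (n + 1)))⁻¹ * v ∈ parabolic cs (F n) :=
        parabolic_mono cs (hanti n) h2
      have heq : (R (F n))⁻¹ * R (F (n + 1))
          = ((R (F n))⁻¹ * v) * ((R (F (n + 1)))⁻¹ * v)⁻¹ := by group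
      rw [heq]
      exact mul_mem h1 (inv_mem h2')
  -- `F` stabilizes
  obtain ⟨N, hNstab⟩ : ∃ N, ∀ n, N ≤ n → F n = F N := by
    have hTne : {k : ℕ | ∃ n, (F n).card = k}.Nonempty := ⟨(F 0).card, 0, rfl⟩
    obtain ⟨N, hN⟩ := Nat.sInf_mem hTne
    refine ⟨N, fun n hn => ?_⟩
    apply Finset.eq_of_subset_of_card_le (hanti' hn)
    rw [hN]
    exact Nat.sInf_le ⟨n, rfl⟩
  have hu1 : (R (F N))⁻¹ * v ∈ parabolic cs (F N) := (hRspec (F N)).1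
  have hadd : ℓ v = ℓ (R (F N)) + ℓ ((R (F N))⁻¹ * v) := by
    have h1 := length_mul_of_min cs (hRspec (F N)).2 hu1
    rwa [mul_inv_cancel_left] at h1
  have huv : (R (F N))⁻¹ * v = 1 := by
    by_contra huv
    obtain ⟨γ, hγK, hγred, hγπ⟩ := mem_parabolic_iff cs hu1
    have hγlen : γ.length = ℓ ((R (F N))⁻¹ * v) := by
      have hh : ℓ (π γ) = γ.length := hγred
      rw [hγπ] at hh
      omega
    have hγne : γ ≠ [] := by
      apply List.ne_nil_of_length_pos
      have : ℓ ((R (F N))⁻¹ * v) ≠ 0 :=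
        fun hz => huv (cs.length_eq_zero_iff.mp hz)
      omega
    obtain ⟨a, γ', rfl⟩ : ∃ a γ', γ = a :: γ' := by
      cases γ with
      | nil => exact absurd rfl hγne
      | cons a γ' => exact ⟨a, γ', rfl⟩
    have hj₀ : a ∈ F N := hγK a List.mem_cons_self
    have hdesc : ℓ (σ a * ((R (F N))⁻¹ * v)) < ℓ ((R (F N))⁻¹ * v) := by
      have hsplit : σ a * ((R (F N))⁻¹ * v) = π γ' := by
        rw [← hγπ, cs.wordProd_cons, ← mul_assoc]
        simp
      rw [hsplit]
      calc ℓ (π γ') ≤ γ'.length := cs.length_wordProd_le _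
        _ < (a :: γ').length := by simp
        _ = ℓ ((R (F N))⁻¹ * v) := hγlen
    -- the conjugation bijection between simple reflections
    classical
    have hS2 : (F N).image (fun i => σ (δb i))
        = ((F N).image (fun j => σ j)).image δW := by
      rw [Finset.image_image]
      apply Finset.image_congr
      intro a _
      exact (hδ a).symm
    have hcard : ((F N).image (fun i => σ (δb i))).card
        = ((F N).image (fun j => σ j)).card := by
      rw [hS2, Finset.card_image_of_injective _ δW.injective]
    have hT2card : (((F N).image (fun i => σ (δb i))).image
        (fun t => (R (F N))⁻¹ * t * R (F N))).card
        = ((F N).image (fun i => σ (δb i))).card := by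
      apply Finset.card_image_of_injective
      intro a b hab
      simpa using hab
    have hT2sub : ((F N).image (fun i => σ (δb i))).image
        (fun t => (R (F N))⁻¹ * t * R (F N)) ⊆ (F N).image (fun j => σ j) := by
      intro t ht
      obtain ⟨t₂, ht₂, rfl⟩ := Finset.mem_image.mp ht
      obtain ⟨i, hiF, rfl⟩ := Finset.mem_image.mp ht₂
      have hiF1 : i ∈ F (N + 1) := by
        rw [hNstab (N + 1) (by omega)]
        exact hiF
      rw [hFsucc N, Finset.mem_filter] at hiF1
      obtain ⟨-, j, hj, hconj⟩ := hiF1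
      rw [hδ i] at hconj
      have hcc : (R (F N))⁻¹ * σ (δb i) * R (F N) = σ j := by
        rw [hconj]
        group
      rw [hcc]
      exact Finset.mem_image_of_mem _ hj
    have hT2eq : ((F N).image (fun i => σ (δb i))).image
        (fun t => (R (F N))⁻¹ * t * R (F N)) = (F N).image (fun j => σ j) :=
      Finset.eq_of_subset_of_card_le hT2sub (by omega)
    have hj₀S : σ a ∈ (F N).image (fun j => σ j) :=
      Finset.mem_image_of_mem _ hj₀
    rw [← hT2eq] at hj₀S
    obtain ⟨t₂, ht₂, ht₂eq⟩ := Finset.mem_image.mp hj₀S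
    obtain ⟨i, hiF, rfl⟩ := Finset.mem_image.mp ht₂
    have hiJ : i ∈ J := hFsub N hiF
    have hminv := hv (δb i) (Finset.mem_image_of_mem δb hiJ)
    have hσ : σ (δb i) * v = R (F N) * (σ a * ((R (F N))⁻¹ * v)) := by
      have h9 : σ (δb i) = R (F N) * σ a * (R (F N))⁻¹ := by
        rw [← ht₂eq]
        group
      rw [h9]
      group
    have hle2 : ℓ (σ (δb i) * v)
        ≤ ℓ (R (F N)) + ℓ (σ a * ((R (F N))⁻¹ * v)) := by
      rw [hσ]
      exact cs.length_mul_le _ _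
    omega
  have hxv : R (F N) = v := by
    have := congrArg (fun z => R (F N) * z) huv
    simpa using this.symm
  refine ⟨F, fun n => R (F n), hInT, N, fun n hn => ?_⟩
  show R (F n) = v
  rw [hNstab n hn, hxv]

end Parts

end BedardAux

/-- Bédard: Let `(W,S)` be a Coxeter system, `δ` a length-preserving
automorphism of `W` permuting the simple reflections, and `J ⊆ S` with `W_J` finite.
Then every sequence in `T(J,δ)` has an eventually constant `w`-component, and the map
`(J_n,w_n)_{n≥0} ↦ w_∞` is a bijection from `T(J,δ)` onto `^{δ(J)}W`, the set of
minimal length representatives of the cosets `W_{δ(J)}\W`. -/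
theorem bedard_bijection (cs : CoxeterSystem M W)
    (δW : W ≃* W) (δb : B ≃ B)
    (hδ : ∀ i : B, δW (cs.simple i) = cs.simple (δb i))
    (J : Finset B) (hJfin : Finite (parabolic cs J)) :
    (∀ Js ws, InT cs δW δb J Js ws →
        ∃ v : W, EvVal ws v ∧ IsMinLeft cs (J.image δb) v) ∧
    (∀ Js ws Js' ws' (v : W), InT cs δW δb J Js ws → InT cs δW δb J Js' ws' →
        EvVal ws v → EvVal ws' v → Js = Js' ∧ ws = ws') ∧
    (∀ v : W, IsMinLeft cs (J.image δb) v →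
        ∃ Js ws, InT cs δW δb J Js ws ∧ EvVal ws v) := by
  refine ⟨?_, ?_, ?_⟩
  · intro Js ws h
    exact BedardAux.part1 cs hδ hJfin h
  · intro Js ws Js' ws' v h h' hv hv'
    exact BedardAux.part2 cs h h' hv hv'
  · intro v hvmin
    exact BedardAux.part3 cs hδ hvmin
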